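/- A sequence (c_k) with polynomial growth whose terms satisfy c_k = ∑_{i} a_i(k) k^i for finitely many eventually periodic functions a_i : ℕ → ℚ (i.e., (c_k) is quasi-polynomial) has a rational generating function ∑ c_k z^k. -/

import Mathlib

open Finset Function fwdDiff

lemma per_mul {a : ℕ → ℚ} {p N : ℕ} (h : ∀ k ≥ N, a (k + p) = a k) :
    ∀ t, ∀ k ≥ N, a (k + p * t) = a k := by
  intro t
  induction t with
  | zero => simp
  | succ t ih =>
      intro k hk
      have : k + p * (t + 1) = (k + p * t) + p := by ring
      rw [this, h _ (le_trans hk (Nat.le_add_right _ _)), ih k hk]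

lemma quasi_diff : ∀ (m L N : ℕ) (c : ℕ → ℚ) (a : Fin (m + 1) → ℕ → ℚ),
    (∀ i, ∀ k ≥ N, a i (k + L) = a i k) →
    (∀ k ≥ N, c k = ∑ i : Fin (m + 1), a i k * (k : ℚ) ^ (i : ℕ)) →
    ∀ n ≥ N, (Δ_[L])^[m + 1] c n = 0 := by
  intro m
  induction m with
  | zero =>
      intro L N c a ha hc n hn
      simp only [zero_add, Function.iterate_one, fwdDiff]
      rw [hc _ hn, hc _ (le_trans hn (Nat.le_add_right _ _))]
      simp [ha 0 n hn]
  | succ m ih =>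
      intro L N c a ha hc n hn
      set b : Fin (m + 1) → ℕ → ℚ := fun t k =>
        ∑ i : Fin (m + 2), if (t : ℕ) < (i : ℕ) then
          a i k * (((i : ℕ).choose t : ℚ) * (L : ℚ) ^ ((i : ℕ) - (t : ℕ))) else 0 with hb
      have hbper : ∀ t : Fin (m + 1), ∀ k ≥ N, b t (k + L) = b t k := by
        intro t k hk
        simp only [hb]
        refine Finset.sum_congr rfl fun i _ => ?_
        by_cases h : (t : ℕ) < (i : ℕ) <;> simp [h, ha i k hk]
      have hd : ∀ k ≥ N, Δ_[L] c k = ∑ t : Fin (m + 1), b t k * (k : ℚ) ^ (t : ℕ) := by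
        intro k hk
        have h1 : Δ_[L] c k = ∑ i : Fin (m + 2), a i k * (((k + L : ℕ) : ℚ) ^ (i : ℕ) - (k : ℚ) ^ (i : ℕ)) := by
          simp only [fwdDiff]
          rw [hc _ hk, hc _ (le_trans hk (Nat.le_add_right _ _)), ← Finset.sum_sub_distrib]
          refine Finset.sum_congr rfl fun i _ => ?_
          rw [ha i k hk]; ring
        rw [h1]
        have h2 : ∀ i : Fin (m + 2), ((k + L : ℕ) : ℚ) ^ (i : ℕ) - (k : ℚ) ^ (i : ℕ)
            = ∑ t ∈ range (i : ℕ), (k : ℚ) ^ t * (L : ℚ) ^ ((i : ℕ) - t) * ((i : ℕ).choose t : ℚ) := by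
          intro i
          push_cast
          rw [add_pow, Finset.sum_range_succ]
          simp
        calc ∑ i : Fin (m + 2), a i k * (((k + L : ℕ) : ℚ) ^ (i : ℕ) - (k : ℚ) ^ (i : ℕ))
            = ∑ i : Fin (m + 2), ∑ t ∈ range (m + 1),
              (if (t : ℕ) < (i : ℕ) then
                a i k * (((i : ℕ).choose t : ℚ) * (L : ℚ) ^ ((i : ℕ) - t)) else 0) * (k : ℚ) ^ t := by
              refine Finset.sum_congr rfl fun i _ => ?_
              rw [h2 i, Finset.mul_sum,
                ← Finset.sum_subset (Finset.range_subset_range.2 (Nat.lt_succ_iff.mp i.isLt))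
                  (fun t _ ht => by rw [if_neg (by simpa using ht), zero_mul])]
              refine Finset.sum_congr rfl fun t ht => ?_
              rw [if_pos (Finset.mem_range.mp ht)]; ring
          _ = ∑ t ∈ range (m + 1), (∑ i : Fin (m + 2), if t < (i : ℕ) then
                      a i k * (((i : ℕ).choose t : ℚ) * (L : ℚ) ^ ((i : ℕ) - t)) else 0) * (k : ℚ) ^ t := by
              rw [Finset.sum_comm]
              exact Finset.sum_congr rfl fun t _ => (Finset.sum_mul _ _ _).symm
          _ = ∑ t : Fin (m + 1), b t k * (k : ℚ) ^ (t : ℕ) :=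
              (Fin.sum_univ_eq_sum_range (fun s => (∑ i : Fin (m + 2), if s < (i : ℕ) then
                      a i k * (((i : ℕ).choose s : ℚ) * (L : ℚ) ^ ((i : ℕ) - s)) else 0) * (k : ℚ) ^ s)
                (m + 1)).symm
      have := ih L N (Δ_[L] c) b hbper hd n hn
      rw [Function.iterate_succ_apply]
      exact this

/-- a polynomially bounded quasi-polynomial sequence (with
eventually periodic coefficient functions) has a rational generating function. -/
theorem stmt_14 (c : ℕ → ℚ) (m : ℕ) (a : Fin (m + 1) → ℕ → ℚ) (p : Fin (m + 1) → ℕ)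
    (hp : ∀ i, 1 ≤ p i)
    (hper : ∀ i, ∃ N : ℕ, ∀ k ≥ N, a i (k + p i) = a i k)
    (hc : ∀ k : ℕ, c k = ∑ i : Fin (m + 1), a i k * (k : ℚ) ^ (i : ℕ))
    (hgrowth : ∃ (C : ℚ) (e : ℕ), ∀ k : ℕ, |c k| ≤ C * ((k : ℚ) + 1) ^ e) :
    ∃ P Q : Polynomial ℚ, Q.coeff 0 ≠ 0 ∧
      PowerSeries.mk c * (Q : PowerSeries ℚ) = (P : PowerSeries ℚ) := by
  classical
  set N : ℕ := Finset.univ.sup (fun i => Classical.choose (hper i)) with hN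
  set L : ℕ := ∏ i, p i with hLdef
  have hL : 1 ≤ L := Finset.one_le_prod' fun i _ => hp i
  have ha : ∀ i, ∀ k ≥ N, a i (k + L) = a i k := by
    intro i k hk
    have hdvd : p i ∣ L := Finset.dvd_prod_of_mem p (Finset.mem_univ i)
    obtain ⟨d, hd⟩ := hdvd
    have hNi : Classical.choose (hper i) ≤ N :=
      Finset.le_sup (f := fun i => Classical.choose (hper i)) (Finset.mem_univ i)
    rw [hd]
    exact per_mul (Classical.choose_spec (hper i)) d k (le_trans hNi hk)
  have hvan : ∀ n ≥ N, (Δ_[L])^[m + 1] c n = 0 :=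
    quasi_diff m L N c a ha (fun k _ => hc k)
  -- the polynomial Q
  refine ⟨PowerSeries.trunc (N + (m + 1) * L) (PowerSeries.mk c *
      (((1 - Polynomial.X ^ L) ^ (m + 1) : Polynomial ℚ) : PowerSeries ℚ)),
    (1 - Polynomial.X ^ L) ^ (m + 1), ?_, ?_⟩
  · simp [Polynomial.coeff_zero_eq_eval_zero, zero_pow (by omega : L ≠ 0)]
  -- coercion of Q to power series
  have hcoe : (((1 - Polynomial.X ^ L) ^ (m + 1) : Polynomial ℚ) : PowerSeries ℚ)
      = (1 - PowerSeries.X ^ L) ^ (m + 1) := by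
    push_cast [Polynomial.coe_pow, Polynomial.coe_sub, Polynomial.coe_one, Polynomial.coe_X]
    rfl
  -- binomial expansion
  have hexp : ((1 : PowerSeries ℚ) - PowerSeries.X ^ L) ^ (m + 1)
      = ∑ j ∈ Finset.range (m + 2),
          PowerSeries.C ((-1 : ℚ) ^ j * ((m + 1).choose j : ℚ)) * PowerSeries.X ^ (L * j) := by
    rw [show (1 : PowerSeries ℚ) - PowerSeries.X ^ L = -PowerSeries.X ^ L + 1 by ring, add_pow]
    refine Finset.sum_congr rfl fun j hj => ?_
    rw [neg_pow, ← pow_mul, mul_comm (L : ℕ) j]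
    simp only [one_pow, mul_one, map_mul, map_pow, map_neg, map_one, map_natCast]
    ring
  -- key coefficient vanishing
  have hcoeff : ∀ n, N + (m + 1) * L ≤ n →
      PowerSeries.coeff n (PowerSeries.mk c *
        (((1 - Polynomial.X ^ L) ^ (m + 1) : Polynomial ℚ) : PowerSeries ℚ)) = 0 := by
    intro n hn
    rw [hcoe, hexp, Finset.mul_sum, map_sum]
    have hterm : ∀ j ∈ Finset.range (m + 2),
        PowerSeries.coeff n (PowerSeries.mk c *
          (PowerSeries.C ((-1 : ℚ) ^ j * ((m + 1).choose j : ℚ)) * PowerSeries.X ^ (L * j)))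
        = (-1 : ℚ) ^ j * ((m + 1).choose j : ℚ) * c (n - L * j) := by
      intro j hj
      have hjle : L * j ≤ n := by
        have h1 : L * j ≤ (m + 1) * L := by
          rw [mul_comm]
          exact Nat.mul_le_mul_right L (Nat.lt_succ_iff.mp (Finset.mem_range.mp hj))
        exact le_trans h1 (le_trans (Nat.le_add_left _ N) hn)
      rw [mul_left_comm, PowerSeries.coeff_C_mul, PowerSeries.coeff_mul_X_pow', if_pos hjle,
        PowerSeries.coeff_mk]
    rw [Finset.sum_congr rfl hterm]
    -- reflect the sum
    set y : ℕ := n - (m + 1) * L with hy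
    have hyN : N ≤ y := by omega
    have hny : n = y + (m + 1) * L := by omega
    have hrefl : ∀ j ∈ Finset.range (m + 2),
        (-1 : ℚ) ^ (m + 1 - j) * ((m + 1).choose (m + 1 - j) : ℚ) * c (n - L * (m + 1 - j))
        = ((-1 : ℤ) ^ (m + 1 - j) * ((m + 1).choose j : ℤ)) • c (y + j • L) := by
      intro j hj
      have hjle : j ≤ m + 1 := by simpa [Nat.lt_succ_iff] using hj
      have h1 : (m + 1).choose (m + 1 - j) = (m + 1).choose j := Nat.choose_symm hjle
      have h2 : n - L * (m + 1 - j) = y + j * L := by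
        have hsplit : (m + 1) * L = j * L + (m + 1 - j) * L := by
          rw [← Nat.add_mul]; congr 1; omega
        have : L * (m + 1 - j) = (m + 1 - j) * L := Nat.mul_comm _ _
        omega
      rw [h1, h2]
      simp only [zsmul_eq_mul, smul_eq_mul]
      push_cast
      ring
    have hswap : (∑ j ∈ Finset.range (m + 2), (-1 : ℚ) ^ j * ((m + 1).choose j : ℚ) * c (n - L * j))
        = ∑ j ∈ Finset.range (m + 2),
            (-1 : ℚ) ^ (m + 1 - j) * ((m + 1).choose (m + 1 - j) : ℚ) * c (n - L * (m + 1 - j)) :=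
      (Finset.sum_range_reflect
        (fun j => (-1 : ℚ) ^ j * ((m + 1).choose j : ℚ) * c (n - L * j)) (m + 2)).symm
    rw [hswap, Finset.sum_congr rfl hrefl, ← fwdDiff_iter_eq_sum_shift L c (m + 1) y]
    exact hvan y hyN
  -- conclude
  ext n
  rw [Polynomial.coeff_coe, PowerSeries.coeff_trunc]
  by_cases h : n < N + (m + 1) * L
  · rw [if_pos h]
  · rw [if_neg h, hcoeff n (by omega)]
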